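/- arXiv:2304.09813 — 6 statements merged into one kernel-verified Lean document; each statement's English description precedes it below -/
import Mathlib

section
/- The Rectified-Poisson pulse admits the Fourier series representation: for r ∈ (0, 1) and all θ ∈ ℝ, (1 − r)(1 − cos θ)/(1 + 2r cos θ + r²) = 1 + ((1 + r)/(2r)) ∑_{k=1}^{∞} (−r)ᵏ · 2 cos(kθ), where the series converges absolutely. -/
open Real

/-- Fourier series representation of the RP pulse, with absolute convergence. -/
theorem rp_pulse_fourier (r : ℝ) (hr : r ∈ Set.Ioo (0 : ℝ) 1) (θ : ℝ) :
    Summable (fun k : ℕ =>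
      |((1 + r) / (2 * r)) * (-r) ^ (k + 1) * (2 * Real.cos ((k + 1 : ℕ) * θ))|) ∧
    (1 - r) * (1 - Real.cos θ) / (1 + 2 * r * Real.cos θ + r ^ 2) =
      1 + ∑' k : ℕ,
        ((1 + r) / (2 * r)) * (-r) ^ (k + 1) * (2 * Real.cos ((k + 1 : ℕ) * θ)) := by
  obtain ⟨hr0, hr1⟩ := hr
  have hD : 0 < 1 + 2 * r * Real.cos θ + r ^ 2 := by
    nlinarith [Real.neg_one_le_cos θ, Real.cos_le_one θ, sq_nonneg (1 - r)]
  set z : ℂ := (↑(-r) : ℂ) * Complex.exp (↑θ * Complex.I) with hzdef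
  have hznorm : ‖z‖ = r := by
    rw [hzdef]
    rw [norm_mul, Complex.norm_exp_ofReal_mul_I]
    simp [abs_of_pos hr0]
  have hzlt : ‖z‖ < 1 := by rw [hznorm]; exact hr1
  have h1 : HasSum (fun n : ℕ => z ^ n) (1 - z)⁻¹ := hasSum_geometric_of_norm_lt_one hzlt
  have h2 : HasSum (fun n : ℕ => z ^ (n + 1)) (z * (1 - z)⁻¹) := by
    have := h1.mul_left z
    simpa [← pow_succ'] using this
  have h3 : HasSum (fun n : ℕ => (z ^ (n + 1)).re) (z * (1 - z)⁻¹).re :=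
    Complex.hasSum_re h2
  have hzre : z.re = -r * Real.cos θ := by
    rw [hzdef]
    simp [Complex.mul_re, Complex.exp_ofReal_mul_I_re, Complex.exp_ofReal_mul_I_im]
  have hzim : z.im = -r * Real.sin θ := by
    rw [hzdef]
    simp [Complex.mul_im, Complex.exp_ofReal_mul_I_re, Complex.exp_ofReal_mul_I_im]
  have hre : ∀ n : ℕ, (z ^ (n + 1)).re = (-r) ^ (n + 1) * Real.cos ((n + 1 : ℕ) * θ) := by
    intro n
    have hz : z ^ (n + 1) = (↑((-r) ^ (n + 1)) : ℂ) * Complex.exp (↑(((n + 1 : ℕ) : ℝ) * θ) * Complex.I) := by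
      rw [hzdef, mul_pow, ← Complex.exp_nat_mul]
      push_cast
      ring_nf
    rw [hz, Complex.re_ofReal_mul, Complex.exp_ofReal_mul_I_re]
  have hnormsq : Complex.normSq (1 - z) = 1 + 2 * r * Real.cos θ + r ^ 2 := by
    simp only [Complex.normSq_apply, Complex.sub_re, Complex.sub_im, Complex.one_re,
      Complex.one_im, hzre, hzim]
    nlinarith [Real.sin_sq_add_cos_sq θ]
  have hval : (z * (1 - z)⁻¹).re =
      (-r * Real.cos θ - r ^ 2) / (1 + 2 * r * Real.cos θ + r ^ 2) := by
    rw [show z * (1 - z)⁻¹ = z / (1 - z) from (div_eq_mul_inv _ _).symm,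
      Complex.div_re, hnormsq]
    simp only [Complex.sub_re, Complex.sub_im, Complex.one_re, Complex.one_im, hzre, hzim]
    rw [← add_div, div_eq_div_iff (ne_of_gt hD) (ne_of_gt hD)]
    linear_combination (-(r ^ 2) * (1 + 2 * r * Real.cos θ + r ^ 2)) * Real.sin_sq_add_cos_sq θ
  have h4 : HasSum (fun n : ℕ => (-r) ^ (n + 1) * Real.cos ((n + 1 : ℕ) * θ))
      ((-r * Real.cos θ - r ^ 2) / (1 + 2 * r * Real.cos θ + r ^ 2)) := by
    have h := h3
    simp only [hre] at h
    rwa [hval] at h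
  have h5 : HasSum (fun k : ℕ =>
      ((1 + r) / (2 * r)) * (-r) ^ (k + 1) * (2 * Real.cos ((k + 1 : ℕ) * θ)))
      (((1 + r) / (2 * r)) * 2 *
        ((-r * Real.cos θ - r ^ 2) / (1 + 2 * r * Real.cos θ + r ^ 2))) := by
    have := h4.mul_left (((1 + r) / (2 * r)) * 2)
    convert this using 1
    · rfl
    · funext k
      ring
  constructor
  · exact summable_abs_iff.mpr h5.summable
  · rw [h5.tsum_eq]
    field_simp
    rw [one_add_div (ne_of_gt (by linarith)), div_left_inj' (ne_of_gt (by linarith))]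
    ring
end

section
/- Every pulse in the family p_{r,φ,ψ} is nonnegative and vanishes at some point: for r ∈ (0, 1) and φ ∈ (−π, π), the function θ ↦ 1 + ((1 − r²)/(1 − r cos φ)) (cos(θ − ψ − φ) − r cos φ)/(1 − 2r cos(θ − ψ) + r²) is ≥ 0 for all θ ∈ ℝ, and there exists θ₀ ∈ ℝ at which it equals 0. -/
open Real

lemma kato_jones_key_id (r φ x : ℝ) :
    (1 - 2 * r * Real.cos x + r ^ 2) * (1 - r * Real.cos φ)
      + (1 - r ^ 2) * (Real.cos (x - φ) - r * Real.cos φ)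
    = 2 * (Real.cos ((x - φ)/2) - r * Real.cos ((x + φ)/2)) ^ 2 := by
  have ha : Real.cos (x - φ) = 2 * Real.cos ((x - φ)/2) ^ 2 - 1 := by
    have := Real.cos_two_mul ((x-φ)/2); rw [show 2*((x-φ)/2) = x - φ by ring] at this; linarith
  have hb : Real.cos (x + φ) = 2 * Real.cos ((x + φ)/2) ^ 2 - 1 := by
    have := Real.cos_two_mul ((x+φ)/2); rw [show 2*((x+φ)/2) = x + φ by ring] at this; linarith
  have h3 : Real.cos x + Real.cos φ = 2 * Real.cos ((x + φ)/2) * Real.cos ((x - φ)/2) :=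
    Real.cos_add_cos x φ
  have h4 : Real.cos x * Real.cos φ = (Real.cos (x - φ) + Real.cos (x + φ))/2 := by
    rw [Real.cos_sub, Real.cos_add]; ring
  linear_combination ha + r^2 * hb - 2*r*h3 + 2*r^2*h4

lemma kato_jones_rewrite (r φ : ℝ) (hr : r ∈ Set.Ioo (0 : ℝ) 1) (θ ψ : ℝ) :
    1 + ((1 - r ^ 2) / (1 - r * Real.cos φ)) *
        ((Real.cos (θ - ψ - φ) - r * Real.cos φ) /
          (1 - 2 * r * Real.cos (θ - ψ) + r ^ 2))
    = 2 * (Real.cos ((θ - ψ - φ)/2) - r * Real.cos ((θ - ψ + φ)/2)) ^ 2 /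
        ((1 - r * Real.cos φ) * (1 - 2 * r * Real.cos (θ - ψ) + r ^ 2)) := by
  obtain ⟨hr0, hr1⟩ := hr
  have hM : 0 < 1 - r * Real.cos φ := by
    nlinarith [Real.cos_le_one φ, Real.neg_one_le_cos φ]
  have hD : 0 < 1 - 2 * r * Real.cos (θ - ψ) + r ^ 2 := by
    nlinarith [Real.cos_le_one (θ - ψ)]
  have key := kato_jones_key_id r φ (θ - ψ)
  have step : 1 + ((1 - r ^ 2) / (1 - r * Real.cos φ)) *
        ((Real.cos (θ - ψ - φ) - r * Real.cos φ) /
          (1 - 2 * r * Real.cos (θ - ψ) + r ^ 2))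
      = ((1 - 2 * r * Real.cos (θ - ψ) + r ^ 2) * (1 - r * Real.cos φ)
          + (1 - r ^ 2) * (Real.cos (θ - ψ - φ) - r * Real.cos φ)) /
        ((1 - r * Real.cos φ) * (1 - 2 * r * Real.cos (θ - ψ) + r ^ 2)) := by
    rw [div_mul_div_comm, one_add_div (mul_pos hM hD).ne']
    congr 1; ring
  rw [step, show θ - ψ - φ = (θ - ψ) - φ by ring, key,
    show (θ - ψ) - φ = θ - ψ - φ by ring]

/-- The pulses p_{r,φ,ψ} are nonnegative and vanish at some point. -/
theorem kato_jones_pulse_nonneg (r φ ψ : ℝ) (hr : r ∈ Set.Ioo (0 : ℝ) 1)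
    (hφ : φ ∈ Set.Ioo (-π) π) :
    (∀ θ : ℝ, 0 ≤ 1 + ((1 - r ^ 2) / (1 - r * Real.cos φ)) *
        ((Real.cos (θ - ψ - φ) - r * Real.cos φ) /
          (1 - 2 * r * Real.cos (θ - ψ) + r ^ 2))) ∧
    (∃ θ₀ : ℝ, 1 + ((1 - r ^ 2) / (1 - r * Real.cos φ)) *
        ((Real.cos (θ₀ - ψ - φ) - r * Real.cos φ) /
          (1 - 2 * r * Real.cos (θ₀ - ψ) + r ^ 2)) = 0) := by
  obtain ⟨hr0, hr1⟩ := hr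
  have hM : 0 < 1 - r * Real.cos φ := by
    nlinarith [Real.cos_le_one φ, Real.neg_one_le_cos φ]
  constructor
  · intro θ
    rw [kato_jones_rewrite r φ ⟨hr0, hr1⟩ θ ψ]
    have hD : 0 < 1 - 2 * r * Real.cos (θ - ψ) + r ^ 2 := by
      nlinarith [Real.cos_le_one (θ - ψ)]
    positivity
  · -- the zero: θ₀ = ψ + 2u with u = π/2 + arctan(β/α)
    have hcv : 0 < Real.cos (φ/2) :=
      Real.cos_pos_of_mem_Ioo ⟨by linarith [hφ.1], by linarith [hφ.2]⟩
    obtain ⟨u, hu⟩ : ∃ u, (1 - r) * Real.cos (φ/2) * Real.cos u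
        + (1 + r) * Real.sin (φ/2) * Real.sin u = 0 := by
      set α := (1 - r) * Real.cos (φ/2) with hα
      set β := (1 + r) * Real.sin (φ/2) with hβ
      have hα0 : 0 < α := by rw [hα]; nlinarith
      refine ⟨π/2 + Real.arctan (β / α), ?_⟩
      rw [Real.cos_add, Real.sin_add, Real.cos_pi_div_two, Real.sin_pi_div_two]
      have htan : Real.tan (Real.arctan (β / α)) = β / α := Real.tan_arctan _
      have hcosA : 0 < Real.cos (Real.arctan (β / α)) := by
        rw [Real.cos_arctan]; positivity
      have hdiv : Real.sin (Real.arctan (β / α)) / Real.cos (Real.arctan (β / α))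
          = β / α := by rw [← Real.tan_eq_sin_div_cos]; exact htan
      have hsin : Real.sin (Real.arctan (β / α))
          = β / α * Real.cos (Real.arctan (β / α)) :=
        (div_eq_iff (ne_of_gt hcosA)).mp hdiv
      rw [hsin]; field_simp; ring
    refine ⟨ψ + 2 * u, ?_⟩
    have hzero : Real.cos ((ψ + 2 * u - ψ - φ)/2)
        - r * Real.cos ((ψ + 2 * u - ψ + φ)/2) = 0 := by
      rw [show (ψ + 2 * u - ψ - φ)/2 = u - φ/2 by ring,
        show (ψ + 2 * u - ψ + φ)/2 = u + φ/2 by ring, Real.cos_sub, Real.cos_add]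
      linear_combination hu
    rw [kato_jones_rewrite r φ ⟨hr0, hr1⟩ (ψ + 2 * u) ψ, hzero]
    simp
end

section
/- The Cauchy-average of the Rectified-Poisson pulse equals the explicit rational mean-field formula: for r ∈ (0, 1), x > 0, V ∈ ℝ, ∫_{−∞}^{∞} [2(1 − r)v² / ((1 + r)² + (1 − r)²v²)] · (1/π) · x / ((v − V)² + x²) dv = (2x(1 + r + (1 − r)x) + 2(1 − r)V²) / ((1 + r + (1 − r)x)² + (1 − r)²V²). -/
open Real MeasureTheory

open Filter Topology


lemma rp_ratio_atTop (c d V : ℝ) (hd : 0 < d) :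
    Tendsto (fun v : ℝ => (v ^ 2 + c) / ((v - V) ^ 2 + d)) atTop (𝓝 1) := by
  have hsq : Tendsto (fun v : ℝ => (v ^ 2)⁻¹) atTop (𝓝 0) :=
    (tendsto_pow_atTop (α := ℝ) (n := 2) (by norm_num)).inv_tendsto_atTop
  have h1 : Tendsto (fun v : ℝ => c / v ^ 2) atTop (𝓝 0) := by
    simpa [div_eq_mul_inv] using hsq.const_mul c
  have h2 : Tendsto (fun v : ℝ => V / v) atTop (𝓝 0) := by
    simpa [div_eq_mul_inv] using tendsto_inv_atTop_zero.const_mul V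
  have h3 : Tendsto (fun v : ℝ => d / v ^ 2) atTop (𝓝 0) := by
    simpa [div_eq_mul_inv] using hsq.const_mul d
  have hnum : Tendsto (fun v : ℝ => 1 + c / v ^ 2) atTop (𝓝 (1 + 0)) :=
    tendsto_const_nhds.add h1
  have hden : Tendsto (fun v : ℝ => (1 - V / v) ^ 2 + d / v ^ 2) atTop (𝓝 ((1 - 0) ^ 2 + 0)) :=
    ((tendsto_const_nhds.sub h2).pow 2).add h3
  have hdiv := hnum.div hden (by norm_num)
  have heq : ∀ᶠ v in atTop,
      (1 + c / v ^ 2) / ((1 - V / v) ^ 2 + d / v ^ 2) = (v ^ 2 + c) / ((v - V) ^ 2 + d) := by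
    filter_upwards [eventually_gt_atTop 0] with v hv
    have hv0 : v ≠ 0 := ne_of_gt hv
    have h4 : (0:ℝ) < (v - V) ^ 2 + d := by positivity
    have h5 : (1 - V / v) ^ 2 + d / v ^ 2 = ((v - V) ^ 2 + d) / v ^ 2 := by
      field_simp
    have h6 : (1 - V / v) ^ 2 + d / v ^ 2 ≠ 0 := by rw [h5]; positivity
    field_simp
  have := hdiv.congr' heq
  simpa using this

lemma rp_ratio_atBot (c d V : ℝ) (hd : 0 < d) :
    Tendsto (fun v : ℝ => (v ^ 2 + c) / ((v - V) ^ 2 + d)) atBot (𝓝 1) := by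
  have h := (rp_ratio_atTop c d (-V) hd).comp tendsto_neg_atBot_atTop
  refine h.congr fun v => ?_
  simp only [Function.comp]
  ring_nf

lemma rp_vanish (c : ℝ) (hc : 0 < c) (l : Filter ℝ) (hl : Tendsto (fun v : ℝ => |v|) l atTop) :
    Tendsto (fun v : ℝ => v / (2 * (v ^ 2 + c))) l (𝓝 0) := by
  apply squeeze_zero_norm' (a := fun v : ℝ => |v|⁻¹)
  · filter_upwards with v
    rcases eq_or_ne v 0 with h | h
    · simp [h]
    · have hv : 0 < |v| := abs_pos.mpr h
      have h2 : (0:ℝ) < 2 * (v ^ 2 + c) := by positivity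
      rw [Real.norm_eq_abs, abs_div, abs_of_pos h2, inv_eq_one_div,
        div_le_div_iff₀ h2 hv]
      nlinarith [abs_mul_abs_self v, abs_nonneg v]
  · exact tendsto_inv_atTop_zero.comp hl

lemma rp_integrable (a x V : ℝ) (ha : 0 < a) (hx : 0 < x) :
    Integrable (fun v : ℝ => v ^ 2 / ((v ^ 2 + a ^ 2) * ((v - V) ^ 2 + x ^ 2))) := by
  have hb : Integrable (fun v : ℝ => (x ^ 2)⁻¹ * (1 + ((v - V) / x) ^ 2)⁻¹) :=
    ((integrable_inv_one_add_sq.comp_div hx.ne').comp_sub_right V).const_mul _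
  have hbound : Integrable (fun v : ℝ => ((v - V) ^ 2 + x ^ 2)⁻¹) := by
    refine hb.congr (Eventually.of_forall fun v => ?_)
    show (x ^ 2)⁻¹ * (1 + ((v - V) / x) ^ 2)⁻¹ = ((v - V) ^ 2 + x ^ 2)⁻¹
    rw [← mul_inv]
    congr 1
    field_simp
    ring
  refine hbound.mono' ?_ ?_
  · refine (Continuous.div (by continuity) (by continuity) fun v => ?_).aestronglyMeasurable
    positivity
  · filter_upwards with v
    have h1 : (0:ℝ) < v ^ 2 + a ^ 2 := by positivity
    have h2 : (0:ℝ) < (v - V) ^ 2 + x ^ 2 := by positivity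
    rw [Real.norm_of_nonneg (by positivity), inv_eq_one_div,
      div_le_div_iff₀ (by positivity) h2]
    nlinarith [mul_nonneg (mul_nonneg (sq_nonneg a) (sq_nonneg (v - V))) hx.le,
      mul_nonneg (sq_nonneg a) (sq_nonneg (v - V)), sq_nonneg (a * x), sq_nonneg a,
      mul_nonneg (sq_nonneg a) h2.le]

lemma rp_key (a x V : ℝ) (ha : 0 < a) (hx : 0 < x) :
    ∫ v : ℝ, v ^ 2 / ((v ^ 2 + a ^ 2) * ((v - V) ^ 2 + x ^ 2)) =
      π * (V ^ 2 + x ^ 2 + a * x) / (x * ((a + x) ^ 2 + V ^ 2)) := by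
  have hint := rp_integrable a x V ha hx
  have hp1 : ∀ v : ℝ, (0:ℝ) < v ^ 2 + a ^ 2 := fun v => by positivity
  have hp2 : ∀ v : ℝ, (0:ℝ) < (v - V) ^ 2 + x ^ 2 := fun v => by positivity
  by_cases hdeg : V = 0 ∧ a = x
  · obtain ⟨hV, hax⟩ := hdeg
    subst hV hax
    set H : ℝ → ℝ := fun v => 1 / (2 * a) * arctan (v / a) - v / (2 * (v ^ 2 + a ^ 2)) with hH
    have hderiv : ∀ v : ℝ, HasDerivAt H
        (v ^ 2 / ((v ^ 2 + a ^ 2) * ((v - 0) ^ 2 + a ^ 2))) v := by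
      intro v
      have h1 : HasDerivAt (fun v : ℝ => arctan (v / a))
          (1 / (1 + (v / a) ^ 2) * (1 / a)) v :=
        (Real.hasDerivAt_arctan (v / a)).comp (h := fun v => v / a) v ((hasDerivAt_id v).div_const a)
      have h2 : HasDerivAt (fun v : ℝ => 2 * (v ^ 2 + a ^ 2)) (2 * (2 * v)) v := by
        simpa using (((hasDerivAt_pow 2 v).add_const (a ^ 2)).const_mul 2)
      have h3 : HasDerivAt (fun v : ℝ => v / (2 * (v ^ 2 + a ^ 2)))
          ((1 * (2 * (v ^ 2 + a ^ 2)) - v * (2 * (2 * v))) / (2 * (v ^ 2 + a ^ 2)) ^ 2) v :=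
        (hasDerivAt_id v).div h2 (by positivity)
      have h4 := ((h1.const_mul (1 / (2 * a))).sub h3)
      refine h4.congr_deriv ?_
      have e1 : 1 + (v / a) ^ 2 ≠ 0 := by positivity
      field_simp
      ring
    have htop : Tendsto H atTop (𝓝 (1 / (2 * a) * (π / 2) - 0)) := by
      refine Tendsto.sub (Tendsto.const_mul _ ?_) ?_
      · exact (tendsto_arctan_atTop.mono_right nhdsWithin_le_nhds).comp
          (tendsto_id.atTop_div_const ha)
      · exact rp_vanish (a ^ 2) (by positivity) atTop (by simpa using tendsto_abs_atTop_atTop)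
    have hbot : Tendsto H atBot (𝓝 (1 / (2 * a) * (-(π / 2)) - 0)) := by
      refine Tendsto.sub (Tendsto.const_mul _ ?_) ?_
      · exact (tendsto_arctan_atBot.mono_right nhdsWithin_le_nhds).comp
          (tendsto_id.atBot_div_const ha)
      · exact rp_vanish (a ^ 2) (by positivity) atBot tendsto_abs_atBot_atTop
    rw [integral_of_hasDerivAt_of_tendsto hderiv hint hbot htop]
    have hane : a ≠ 0 := ha.ne'
    field_simp
    ring
  · have hD2 : (0:ℝ) < (a - x) ^ 2 + V ^ 2 := by
      rcases not_and_or.mp hdeg with h | h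
      · have h1 : 0 < |V| := abs_pos.mpr h
        nlinarith [sq_abs V, sq_nonneg (a - x)]
      · have h1 : 0 < |a - x| := abs_pos.mpr (sub_ne_zero.mpr h)
        nlinarith [sq_abs (a - x), sq_nonneg V]
    have hD1 : (0:ℝ) < (a + x) ^ 2 + V ^ 2 := by nlinarith [sq_nonneg V]
    have hD : (0:ℝ) < ((a + x) ^ 2 + V ^ 2) * ((a - x) ^ 2 + V ^ 2) := mul_pos hD1 hD2
    set Δ : ℝ := ((a + x) ^ 2 + V ^ 2) * ((a - x) ^ 2 + V ^ 2) with hΔ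
    set A : ℝ := -(2 * a ^ 2 * V) / Δ with hA
    set B : ℝ := -(a ^ 2 * (V ^ 2 + x ^ 2 - a ^ 2)) / Δ with hB
    set E : ℝ := 1 - a ^ 2 * (V ^ 2 - x ^ 2 + a ^ 2) / Δ with hE
    set G : ℝ → ℝ := fun v =>
      A / 2 * (Real.log (v ^ 2 + a ^ 2) - Real.log ((v - V) ^ 2 + x ^ 2)) +
        B / a * arctan (v / a) + E / x * arctan ((v - V) / x) with hG
    have hderiv : ∀ v : ℝ, HasDerivAt G
        (v ^ 2 / ((v ^ 2 + a ^ 2) * ((v - V) ^ 2 + x ^ 2))) v := by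
      intro v
      have h1 : HasDerivAt (fun v : ℝ => v ^ 2 + a ^ 2) (2 * v) v := by
        simpa using (hasDerivAt_pow 2 v).add_const (a ^ 2)
      have h2 : HasDerivAt (fun v : ℝ => (v - V) ^ 2 + x ^ 2) (2 * (v - V)) v := by
        simpa using (((hasDerivAt_id v).sub_const V).pow 2).add_const (x ^ 2)
      have hl1 := h1.log (hp1 v).ne'
      have hl2 := h2.log (hp2 v).ne'
      have h3 : HasDerivAt (fun v : ℝ => arctan (v / a))
          (1 / (1 + (v / a) ^ 2) * (1 / a)) v :=
        (Real.hasDerivAt_arctan (v / a)).comp (h := fun v => v / a) v ((hasDerivAt_id v).div_const a)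
      have h4 : HasDerivAt (fun v : ℝ => arctan ((v - V) / x))
          (1 / (1 + ((v - V) / x) ^ 2) * (1 / x)) v :=
        (Real.hasDerivAt_arctan ((v - V) / x)).comp (h := fun v => (v - V) / x) v
          (((hasDerivAt_id v).sub_const V).div_const x)
      have h5 := (((hl1.sub hl2).const_mul (A / 2)).add (h3.const_mul (B / a))).add
        (h4.const_mul (E / x))
      refine h5.congr_deriv ?_
      rw [hA, hB, hE]
      have e1 : (1:ℝ) + (v / a) ^ 2 ≠ 0 := by positivity
      have e2 : (1:ℝ) + ((v - V) / x) ^ 2 ≠ 0 := by positivity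
      have e3 : (v ^ 2 + a ^ 2) ≠ 0 := (hp1 v).ne'
      have e4 : ((v - V) ^ 2 + x ^ 2) ≠ 0 := (hp2 v).ne'
      have e5 : Δ ≠ 0 := hD.ne'
      rw [hΔ] at e5 ⊢
      field_simp
      ring
    have hlogT : Tendsto
        (fun v : ℝ => Real.log (v ^ 2 + a ^ 2) - Real.log ((v - V) ^ 2 + x ^ 2))
        atTop (𝓝 0) := by
      have h := (Real.continuousAt_log one_ne_zero).tendsto.comp
        (rp_ratio_atTop (a ^ 2) (x ^ 2) V (by positivity))
      simp only [Real.log_one] at h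
      refine h.congr fun v => ?_
      exact Real.log_div (hp1 v).ne' (hp2 v).ne'
    have hlogB : Tendsto
        (fun v : ℝ => Real.log (v ^ 2 + a ^ 2) - Real.log ((v - V) ^ 2 + x ^ 2))
        atBot (𝓝 0) := by
      have h := (Real.continuousAt_log one_ne_zero).tendsto.comp
        (rp_ratio_atBot (a ^ 2) (x ^ 2) V (by positivity))
      simp only [Real.log_one] at h
      refine h.congr fun v => ?_
      exact Real.log_div (hp1 v).ne' (hp2 v).ne'
    have hat1T : Tendsto (fun v : ℝ => arctan (v / a)) atTop (𝓝 (π / 2)) :=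
      (tendsto_arctan_atTop.mono_right nhdsWithin_le_nhds).comp
        (tendsto_id.atTop_div_const ha)
    have hat1B : Tendsto (fun v : ℝ => arctan (v / a)) atBot (𝓝 (-(π / 2))) :=
      (tendsto_arctan_atBot.mono_right nhdsWithin_le_nhds).comp
        (tendsto_id.atBot_div_const ha)
    have hat2T : Tendsto (fun v : ℝ => arctan ((v - V) / x)) atTop (𝓝 (π / 2)) := by
      refine (tendsto_arctan_atTop.mono_right nhdsWithin_le_nhds).comp
        (Tendsto.atTop_div_const hx ?_)
      exact tendsto_atTop_add_const_right atTop (-V) tendsto_id |>.congr fun v => by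
        simp [sub_eq_add_neg, add_comm]
    have hat2B : Tendsto (fun v : ℝ => arctan ((v - V) / x)) atBot (𝓝 (-(π / 2))) := by
      refine (tendsto_arctan_atBot.mono_right nhdsWithin_le_nhds).comp
        (Tendsto.atBot_div_const hx ?_)
      exact tendsto_atBot_add_const_right atBot (-V) tendsto_id |>.congr fun v => by
        simp [sub_eq_add_neg, add_comm]
    have htop : Tendsto G atTop
        (𝓝 (A / 2 * 0 + B / a * (π / 2) + E / x * (π / 2))) :=
      ((hlogT.const_mul (A / 2)).add (hat1T.const_mul (B / a))).add (hat2T.const_mul (E / x))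
    have hbot : Tendsto G atBot
        (𝓝 (A / 2 * 0 + B / a * (-(π / 2)) + E / x * (-(π / 2)))) :=
      ((hlogB.const_mul (A / 2)).add (hat1B.const_mul (B / a))).add (hat2B.const_mul (E / x))
    rw [integral_of_hasDerivAt_of_tendsto hderiv hint hbot htop, hA, hB, hE, hΔ]
    have e5 : ((a + x) ^ 2 + V ^ 2) * ((a - x) ^ 2 + V ^ 2) ≠ 0 := hD.ne'
    field_simp
    ring

/-- Cauchy-average of the RP pulse equals the explicit rational mean-field formula. -/
theorem rp_pulse_cauchy_average (r x V : ℝ) (hr : r ∈ Set.Ioo (0 : ℝ) 1) (hx : 0 < x) :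
    ∫ v : ℝ, (2 * (1 - r) * v ^ 2 / ((1 + r) ^ 2 + (1 - r) ^ 2 * v ^ 2)) *
        ((1 / π) * x / ((v - V) ^ 2 + x ^ 2)) =
      (2 * x * (1 + r + (1 - r) * x) + 2 * (1 - r) * V ^ 2) /
        ((1 + r + (1 - r) * x) ^ 2 + (1 - r) ^ 2 * V ^ 2) := by
  obtain ⟨hr0, hr1⟩ := hr
  have h1r : (0:ℝ) < 1 - r := by linarith
  have h2r : (0:ℝ) < 1 + r := by linarith
  have ha : 0 < (1 + r) / (1 - r) := div_pos h2r h1r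
  have heq : ∀ v : ℝ,
      (2 * (1 - r) * v ^ 2 / ((1 + r) ^ 2 + (1 - r) ^ 2 * v ^ 2)) *
        ((1 / π) * x / ((v - V) ^ 2 + x ^ 2)) =
      (2 * x / (π * (1 - r))) *
        (v ^ 2 / ((v ^ 2 + ((1 + r) / (1 - r)) ^ 2) * ((v - V) ^ 2 + x ^ 2))) := by
    intro v
    have e1 : (1 + r) ^ 2 + (1 - r) ^ 2 * v ^ 2 ≠ 0 := by positivity
    have e2 : (v - V) ^ 2 + x ^ 2 ≠ 0 := by positivity
    have e3 : v ^ 2 + ((1 + r) / (1 - r)) ^ 2 ≠ 0 := by positivity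
    have e4 : π ≠ 0 := Real.pi_ne_zero
    field_simp
    ring
  simp_rw [heq]
  rw [integral_const_mul, rp_key _ x V ha hx]
  have h3 : (0:ℝ) < 1 + r + (1 - r) * x := by nlinarith
  have e5 : (0:ℝ) < ((1 + r) / (1 - r) + x) ^ 2 + V ^ 2 := by positivity
  have e6 : (0:ℝ) < (1 + r + (1 - r) * x) ^ 2 + (1 - r) ^ 2 * V ^ 2 := by positivity
  have e4 : π ≠ 0 := Real.pi_ne_zero
  have e7 : x * (((1 + r) / (1 - r) + x) ^ 2 + V ^ 2) ≠ 0 := by positivity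
  field_simp
  ring
end

section
/- The partial derivative of the mean Rectified-Poisson activity with respect to the mean voltage is strictly negative at any physical fixed point: for r ∈ (0, 1), x > 0 and V < 0, ∂_V P_{RP,r}(x, V) = 4(1 − r²)(1 + r + (1 − r)x)·V / ((1 + r + (1 − r)x)² + (1 − r)²V²)² < 0, where P_{RP,r}(x, V) = (2x(1 + r + (1 − r)x) + 2(1 − r)V²) / ((1 + r + (1 − r)x)² + (1 − r)²V²). -/
open Real

/-- The voltage-derivative of the mean RP activity is strictly negative for V < 0. -/
theorem rp_mean_voltage_derivative (r x V : ℝ) (hr : r ∈ Set.Ioo (0 : ℝ) 1)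
    (hx : 0 < x) (hV : V < 0) :
    HasDerivAt (fun W : ℝ =>
        (2 * x * (1 + r + (1 - r) * x) + 2 * (1 - r) * W ^ 2) /
          ((1 + r + (1 - r) * x) ^ 2 + (1 - r) ^ 2 * W ^ 2))
      (4 * (1 - r ^ 2) * (1 + r + (1 - r) * x) * V /
        ((1 + r + (1 - r) * x) ^ 2 + (1 - r) ^ 2 * V ^ 2) ^ 2) V ∧
    4 * (1 - r ^ 2) * (1 + r + (1 - r) * x) * V /
        ((1 + r + (1 - r) * x) ^ 2 + (1 - r) ^ 2 * V ^ 2) ^ 2 < 0 := by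
  obtain ⟨hr0, hr1⟩ := hr
  set a : ℝ := 1 + r + (1 - r) * x with ha
  have hrpos : 0 < 1 - r := by linarith
  have hapos : 0 < a := by positivity
  have hD : 0 < a ^ 2 + (1 - r) ^ 2 * V ^ 2 := by positivity
  constructor
  · have hN : HasDerivAt (fun W : ℝ => 2 * x * a + 2 * (1 - r) * W ^ 2)
        (2 * (1 - r) * (2 * V)) V := by
      have := ((hasDerivAt_pow 2 V).const_mul (2 * (1 - r))).const_add (2 * x * a)
      simpa using this
    have hDd : HasDerivAt (fun W : ℝ => a ^ 2 + (1 - r) ^ 2 * W ^ 2)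
        ((1 - r) ^ 2 * (2 * V)) V := by
      have := ((hasDerivAt_pow 2 V).const_mul ((1 - r) ^ 2)).const_add (a ^ 2)
      simpa using this
    have h := hN.div hDd hD.ne'
    exact h.congr_deriv (by rw [ha]; ring)
  · apply div_neg_of_neg_of_pos
    · have h1 : 0 < 1 - r ^ 2 := by nlinarith
      have : 0 < 4 * (1 - r ^ 2) * a := by positivity
      exact mul_neg_of_pos_of_neg this hV
    · positivity
end

section
/- If the recurrent synaptic input is independent of the mean voltage, the asynchronous fixed point of the RV dynamics cannot undergo a Hopf bifurcation: suppose γ > 0, τ_m > 0, I_syn = I_syn(R) is a differentiable function of R alone, and (R*, V*) is a fixed point of the rescaled RV system Ṙ = γ/(π τ_m) + 2RV, V̇ = V² − (π τ_m R)² + I₀ + I_syn(R) with R* > 0. Then the trace of the Jacobian at (R*, V*), which equals 4V*, is strictly negative; hence the Jacobian cannot have a pair of purely imaginary nonzero eigenvalues. -/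
open Real Matrix Polynomial

lemma my_charpoly_fin_two (M : Matrix (Fin 2) (Fin 2) ℂ) :
    M.charpoly = X ^ 2 - C M.trace * X + C M.det := by
  rw [Matrix.charpoly, Matrix.det_fin_two, Matrix.trace_fin_two, Matrix.det_fin_two]
  simp [Matrix.charmatrix_apply_eq, Matrix.charmatrix_apply_ne, Matrix.charmatrix]
  ring

/-- If the recurrent synaptic input does not depend on the mean voltage, the trace of
the Jacobian at a fixed point equals 4V* < 0, hence no pair of purely imaginary
nonzero eigenvalues exists. -/
theorem no_hopf_without_voltage_coupling (γ τm I₀ R V : ℝ) (Isyn : ℝ → ℝ)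
    (hγ : 0 < γ) (hτ : 0 < τm) (hR : 0 < R) (hdiff : Differentiable ℝ Isyn)
    (hfixR : γ / (π * τm) + 2 * R * V = 0)
    (hfixV : V ^ 2 - (π * τm * R) ^ 2 + I₀ + Isyn R = 0) :
    Matrix.trace (Matrix.of ![![2 * V, 2 * R],
        ![-2 * π ^ 2 * τm ^ 2 * R + deriv Isyn R, 2 * V]]) = 4 * V ∧
    (4 : ℝ) * V < 0 ∧
    ¬ ∃ ω : ℝ, ω ≠ 0 ∧
      (Matrix.charpoly ((Matrix.of ![![2 * V, 2 * R],
          ![-2 * π ^ 2 * τm ^ 2 * R + deriv Isyn R, 2 * V]]).map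
        (Complex.ofReal))).IsRoot (Complex.I * ω) ∧
      (Matrix.charpoly ((Matrix.of ![![2 * V, 2 * R],
          ![-2 * π ^ 2 * τm ^ 2 * R + deriv Isyn R, 2 * V]]).map
        (Complex.ofReal))).IsRoot (-(Complex.I * ω)) := by
  have hV : V < 0 := by
    have h1 : 0 < γ / (π * τm) := div_pos hγ (mul_pos Real.pi_pos hτ)
    nlinarith [mul_pos hR (neg_pos.mpr (show V < 0 from by nlinarith))]
  refine ⟨?_, by linarith, ?_⟩
  · simp [Matrix.trace_fin_two]; ring
  · rintro ⟨ω, hω, h1, h2⟩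
    set M := ((Matrix.of ![![2 * V, 2 * R],
          ![-2 * π ^ 2 * τm ^ 2 * R + deriv Isyn R, 2 * V]]).map
        (Complex.ofReal))
    rw [my_charpoly_fin_two] at h1 h2
    simp only [Polynomial.IsRoot, Polynomial.eval_add, Polynomial.eval_sub,
      Polynomial.eval_mul, Polynomial.eval_pow, Polynomial.eval_X, Polynomial.eval_C] at h1 h2
    have htr : M.trace = (4 * V : ℝ) := by
      simp [M, Matrix.trace_fin_two]; push_cast; ring
    have hsub := sub_eq_zero.mpr (h1.trans h2.symm)
    rw [htr] at hsub
    have hkey : ((4 * V : ℝ) : ℂ) * (2 * Complex.I * ω) = 0 := by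
      linear_combination -hsub
    rcases mul_eq_zero.mp hkey with h | h
    · have h' : (4 * V : ℝ) = 0 := by exact_mod_cast h
      linarith
    · have hω' : (ω : ℂ) ≠ 0 := Complex.ofReal_ne_zero.mpr hω
      simp [mul_eq_zero, Complex.I_ne_zero, hω'] at h
end

section
/- For the RV dynamics with instantaneous spike-triggered conductance-based synapses, the trace of the Jacobian at any fixed point is strictly negative: for the system τ_m Ṙ = γ/(π τ_m) + 2RV − ĝ τ_m R², τ_m V̇ = V² − (π τ_m R)² + ĝ τ_m R (E − V) + I₀ with γ > 0, ĝ > 0, τ_m > 0, and any fixed point (R*, V*) with R* > 0, the trace of the Jacobian (in rescaled time) equals −2γ/(π τ_m R*) − ĝ τ_m R* and is strictly negative. -/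
open Real

/-- For instantaneous spike-triggered conductance-based synapses, the trace of the
Jacobian (in rescaled time) at any fixed point is strictly negative. -/
theorem conductance_based_trace_negative (γ τm g E I₀ R V : ℝ)
    (hγ : 0 < γ) (hτ : 0 < τm) (hg : 0 < g) (hR : 0 < R)
    (hfixR : γ / (π * τm) + 2 * R * V - g * τm * R ^ 2 = 0)
    (hfixV : V ^ 2 - (π * τm * R) ^ 2 + g * τm * R * (E - V) + I₀ = 0) :
    (2 * V - 2 * g * τm * R) + (2 * V - g * τm * R) =
      -(2 * γ) / (π * τm * R) - g * τm * R ∧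
    (2 * V - 2 * g * τm * R) + (2 * V - g * τm * R) < 0 := by
  have hπ : (0:ℝ) < π := Real.pi_pos
  have h1 : γ / (π * τm) = g * τm * R ^ 2 - 2 * R * V := by linarith
  have heq : (2 * V - 2 * g * τm * R) + (2 * V - g * τm * R) =
      -(2 * γ) / (π * τm * R) - g * τm * R := by
    field_simp at h1 ⊢
    nlinarith [h1]
  refine ⟨heq, ?_⟩
  rw [heq]
  have h2 : 0 < (2 * γ) / (π * τm * R) := by positivity
  have h3 : 0 < g * τm * R := by positivity
  have : -(2 * γ) / (π * τm * R) = -((2 * γ) / (π * τm * R)) := by ring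
  rw [this]; linarith
end
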